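/- Let G be a connected simple graph and let a, b, c, d be four distinct vertices such that ab, bc, cd are edges of G and ac, bd are not edges of G. Then the graph G′ obtained from G by deleting the edges ab and cd and adding the edges ac and bd is connected, and every vertex has the same degree in G′ as in G. -/

import Mathlib

open scoped Classical
open Finset

/-- Let `G` be a connected simple graph and let `a, b, c, d` be four
distinct vertices with `ab, bc, cd ∈ E(G)` and `ac, bd ∉ E(G)`.  Then the graph `G'`
obtained from `G` by deleting the edges `ab, cd` and adding the edges `ac, bd` (a *flip*)
is connected, and every vertex has the same degree in `G'` as in `G`. -/
theorem flip_preserves_connectivity_and_degrees {V : Type*} [Fintype V]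
    (G : SimpleGraph V) (hG : G.Connected)
    (a b c d : V)
    (hab' : a ≠ b) (hac' : a ≠ c) (had' : a ≠ d) (hbc' : b ≠ c) (hbd' : b ≠ d) (hcd' : c ≠ d)
    (hab : G.Adj a b) (hbc : G.Adj b c) (hcd : G.Adj c d)
    (hac : ¬ G.Adj a c) (hbd : ¬ G.Adj b d) :
    ((G.deleteEdges {s(a, b), s(c, d)}) ⊔
        SimpleGraph.fromEdgeSet {s(a, c), s(b, d)}).Connected ∧
      ∀ x : V,
        ((G.deleteEdges {s(a, b), s(c, d)}) ⊔
            SimpleGraph.fromEdgeSet {s(a, c), s(b, d)}).degree x = G.degree x := by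
  set G' := (G.deleteEdges {s(a, b), s(c, d)}) ⊔
      SimpleGraph.fromEdgeSet {s(a, c), s(b, d)} with hG'def
  have hadj : ∀ x y : V, G'.Adj x y ↔
      (G.Adj x y ∧ ¬(s(x,y) = s(a,b) ∨ s(x,y) = s(c,d))) ∨
      ((s(x,y) = s(a,c) ∨ s(x,y) = s(b,d)) ∧ x ≠ y) := by
    intro x y
    simp [hG'def, SimpleGraph.deleteEdges_adj, SimpleGraph.fromEdgeSet_adj,
      Set.mem_insert_iff, Set.mem_singleton_iff]
  have hG'ac : G'.Adj a c := (hadj a c).mpr (Or.inr ⟨Or.inl rfl, hac'⟩)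
  have hG'bd : G'.Adj b d := (hadj b d).mpr (Or.inr ⟨Or.inr rfl, hbd'⟩)
  have hG'bc : G'.Adj b c := by
    rw [hadj]
    simp only [Sym2.eq_iff]
    aesop
  have key : ∀ u v : V, G.Adj u v → G'.Reachable u v := by
    intro u v huv
    by_cases h1 : s(u,v) = s(a,b)
    · rcases Sym2.eq_iff.mp h1 with ⟨rfl, rfl⟩ | ⟨rfl, rfl⟩
      · exact ⟨SimpleGraph.Walk.cons hG'ac (SimpleGraph.Walk.cons hG'bc.symm SimpleGraph.Walk.nil)⟩
      · exact ⟨SimpleGraph.Walk.cons hG'bc (SimpleGraph.Walk.cons hG'ac.symm SimpleGraph.Walk.nil)⟩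
    by_cases h2 : s(u,v) = s(c,d)
    · rcases Sym2.eq_iff.mp h2 with ⟨rfl, rfl⟩ | ⟨rfl, rfl⟩
      · exact ⟨SimpleGraph.Walk.cons hG'bc.symm (SimpleGraph.Walk.cons hG'bd SimpleGraph.Walk.nil)⟩
      · exact ⟨SimpleGraph.Walk.cons hG'bd.symm (SimpleGraph.Walk.cons hG'bc SimpleGraph.Walk.nil)⟩
    · exact ((hadj u v).mpr (Or.inl ⟨huv, by tauto⟩)).reachable
  have lift : ∀ {u v : V}, G.Walk u v → G'.Reachable u v := by
    intro u v w
    induction w with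
    | nil => exact SimpleGraph.Reachable.refl _
    | cons h p ih => exact (key _ _ h).trans ih
  have hpre : G'.Preconnected := fun x y => lift (hG.preconnected x y).some
  haveI : Nonempty V := hG.nonempty
  refine ⟨⟨hpre⟩, fun x => ?_⟩
  unfold SimpleGraph.degree
  by_cases hxa : x = a
  · subst hxa
    have hs : G'.neighborFinset x = insert c ((G.neighborFinset x).erase b) := by
      ext y
      simp only [SimpleGraph.mem_neighborFinset, hadj, Sym2.eq_iff, Finset.mem_insert,
        Finset.mem_erase]
      aesop
    rw [hs, Finset.card_insert_of_notMem (by simp [SimpleGraph.mem_neighborFinset, hac]),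
      Finset.card_erase_add_one (by simp [SimpleGraph.mem_neighborFinset, hab])]
  by_cases hxb : x = b
  · subst hxb
    have hs : G'.neighborFinset x = insert d ((G.neighborFinset x).erase a) := by
      ext y
      simp only [SimpleGraph.mem_neighborFinset, hadj, Sym2.eq_iff, Finset.mem_insert,
        Finset.mem_erase]
      aesop
    rw [hs, Finset.card_insert_of_notMem (by simp [SimpleGraph.mem_neighborFinset, hbd]),
      Finset.card_erase_add_one (by simp [SimpleGraph.mem_neighborFinset, hab.symm])]
  by_cases hxc : x = c
  · subst hxc
    have hs : G'.neighborFinset x = insert a ((G.neighborFinset x).erase d) := by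
      ext y
      simp only [SimpleGraph.mem_neighborFinset, hadj, Sym2.eq_iff, Finset.mem_insert,
        Finset.mem_erase]
      constructor
      · rintro (⟨h, hne⟩ | ⟨((⟨h1, h2⟩ | ⟨h1, h2⟩) | (⟨h1, h2⟩ | ⟨h1, h2⟩)), hdy⟩)
        · exact Or.inr ⟨fun hyd => hne (Or.inr (Or.inl ⟨by trivial, hyd⟩)), h⟩
        · exact absurd h1.symm hac'
        · exact Or.inl h2
        · exact absurd h1.symm hbc'
        · exact absurd h1 hcd'
      · rintro (rfl | ⟨hyd, h⟩)
        · exact Or.inr ⟨Or.inl (Or.inr ⟨by trivial, rfl⟩), fun hh => hac' hh.symm⟩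
        · refine Or.inl ⟨h, ?_⟩
          rintro ((⟨h1, _⟩ | ⟨h1, _⟩) | (⟨_, h2⟩ | ⟨h1, _⟩))
          · exact hac' h1.symm
          · exact hbc' h1.symm
          · exact hyd h2
          · exact hcd' h1
    rw [hs, Finset.card_insert_of_notMem (by
        simp only [Finset.mem_erase, SimpleGraph.mem_neighborFinset]
        exact fun h => hac h.2.symm),
      Finset.card_erase_add_one (by simp [SimpleGraph.mem_neighborFinset, hcd])]
  by_cases hxd : x = d
  · subst hxd
    have hs : G'.neighborFinset x = insert b ((G.neighborFinset x).erase c) := by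
      ext y
      simp only [SimpleGraph.mem_neighborFinset, hadj, Sym2.eq_iff, Finset.mem_insert,
        Finset.mem_erase]
      constructor
      · rintro (⟨h, hne⟩ | ⟨((⟨h1, h2⟩ | ⟨h1, h2⟩) | (⟨h1, h2⟩ | ⟨h1, h2⟩)), hdy⟩)
        · exact Or.inr ⟨fun hyc => hne (Or.inr (Or.inr ⟨trivial, hyc⟩)), h⟩
        · exact absurd h1.symm had'
        · exact absurd h1.symm hcd'
        · exact absurd h1.symm hbd'
        · exact Or.inl h2
      · rintro (rfl | ⟨hyc, h⟩)
        · exact Or.inr ⟨Or.inr (Or.inr ⟨trivial, rfl⟩), fun hh => hbd' hh.symm⟩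
        · refine Or.inl ⟨h, ?_⟩
          rintro ((⟨h1, _⟩ | ⟨h1, _⟩) | (⟨h1, _⟩ | ⟨_, h2⟩))
          · exact had' h1.symm
          · exact hbd' h1.symm
          · exact hcd' h1.symm
          · exact hyc h2
    rw [hs, Finset.card_insert_of_notMem (by
        simp only [Finset.mem_erase, SimpleGraph.mem_neighborFinset]
        exact fun h => hbd h.2.symm),
      Finset.card_erase_add_one (by simp [SimpleGraph.mem_neighborFinset, hcd.symm])]
  · have hs : G'.neighborFinset x = G.neighborFinset x := by
      ext y
      simp only [SimpleGraph.mem_neighborFinset, hadj, Sym2.eq_iff]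
      constructor
      · rintro (⟨h, _⟩ | ⟨((⟨h1, _⟩ | ⟨h1, _⟩) | (⟨h1, _⟩ | ⟨h1, _⟩)), _⟩)
        · exact h
        · exact absurd h1 hxa
        · exact absurd h1 hxc
        · exact absurd h1 hxb
        · exact absurd h1 hxd
      · intro h
        refine Or.inl ⟨h, ?_⟩
        rintro ((⟨h1, _⟩ | ⟨h1, _⟩) | (⟨h1, _⟩ | ⟨h1, _⟩))
        · exact hxa h1
        · exact hxb h1
        · exact hxc h1
        · exact hxd h1
    rw [hs]
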